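/- Under the delayed-information lower-bound setup for convex losses, for every delayed decision rule (X_t)_{t=1}^T it holds that E[ Σ_{i=0}^{Z} Σ_{t=c_{iK′}+1}^{c_{(i+1)K′}} (n − 2K′ + 1)·⟨w_i, X_t(w_0,…,w_{i−1})⟩ − min_{x∈K} Σ_{i=0}^{Z} (c_{(i+1)K′} − c_{iK′})·(n − 2K′ + 1)·⟨w_i, x⟩ ] ≥ (n − 2K′ + 1)·R·G·T / √(2(Z+1)). -/

import Mathlib

/-!
Statement 5: the expected-regret inequality behind Theorem 2 (lower bound for
convex losses in the delayed-information setup on the 1-connected cycle).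
-/

open scoped BigOperators RealInnerProductSpace
open Finset

noncomputable section

abbrev EV (d : ℕ) := EuclideanSpace ℝ (Fin d)

/-- The random loss vectors: `w_i` has coordinates `±G/√d`, the signs being given
by the Boolean family `ε`. -/
def cornerVec (d Zp : ℕ) (G : ℝ) (ε : Fin Zp → Fin d → Bool) (i : Fin Zp) : EV d :=
  WithLp.toLp 2 (fun j => (if ε i j then (1 : ℝ) else -1) * (G / Real.sqrt d))


/- Auxiliary development -/


open Finset

noncomputable section

def sg (b : Bool) : ℤ := if b then 1 else -1

def Ssum (N : ℕ) (η : Fin N → Bool) : ℤ := ∑ i, sg (η i)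

def bI (N : ℕ) : ℤ := ∑ η : Fin N → Bool, |Ssum N η|

def cI (N : ℕ) : ℤ := ((Finset.univ.filter (fun η : Fin N → Bool => Ssum N η = 0)).card : ℤ)

lemma bI_one : bI 1 = 2 := by decide

lemma cI_nonneg (N : ℕ) : 0 ≤ cI N := Int.natCast_nonneg _

lemma bI_nonneg (N : ℕ) : 0 ≤ bI N := Finset.sum_nonneg fun _ _ => abs_nonneg _

lemma Ssum_cons (N : ℕ) (x : Bool) (η : Fin N → Bool) :
    Ssum (N + 1) (Fin.cons x η) = sg x + Ssum N η := by
  simp [Ssum, Fin.sum_univ_succ]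


lemma Ssum_eq_card (N : ℕ) (η : Fin N → Bool) :
    Ssum N η = 2 * ((Finset.univ.filter (fun i => η i = true)).card : ℤ) - N := by
  have : ∀ b : Bool, sg b = 2 * (if b = true then (1:ℤ) else 0) - 1 := by decide
  simp only [Ssum, this]
  rw [Finset.sum_sub_distrib, ← Finset.mul_sum, Finset.sum_boole, Finset.sum_const]
  simp [mul_comm]

lemma cI_ge (k : ℕ) : (Nat.centralBinom k : ℤ) ≤ cI (2 * k) := by
  rw [cI, Nat.centralBinom]
  have hcard : ((2*k).choose k :ℤ) = ((Finset.powersetCard k (Finset.univ : Finset (Fin (2*k)))).card : ℤ) := by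
    rw [Finset.card_powersetCard]; simp
  rw [hcard]
  have := Finset.card_le_card_of_injOn
    (f := fun s : Finset (Fin (2*k)) => (fun i => decide (i ∈ s) : Fin (2*k) → Bool))
    (s := Finset.powersetCard k (Finset.univ : Finset (Fin (2*k))))
    (t := Finset.univ.filter (fun η : Fin (2*k) → Bool => Ssum (2*k) η = 0))
    ?_ ?_
  · exact_mod_cast this
  · intro s hs
    rw [Finset.mem_coe, Finset.mem_powersetCard] at hs
    rw [Finset.mem_coe, Finset.mem_filter]
    refine ⟨Finset.mem_univ _, ?_⟩
    rw [Ssum_eq_card]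
    have : Finset.univ.filter (fun i => decide (i ∈ s) = true) = s := by
      ext i; simp
    rw [this, hs.2]
    push_cast; ring
  · intro s hs s' hs' h
    ext i
    have := congrFun h i
    simpa using this

lemma centralBinom_sq (k : ℕ) (hk : 1 ≤ k) :
    16 ^ k ≤ 4 * k * (Nat.centralBinom k) ^ 2 := by
  induction k with
  | zero => omega
  | succ n ih =>
    rcases Nat.eq_or_lt_of_le hk with h1 | h1
    · simp [← h1]; rw [show Nat.centralBinom 1 = 2 by decide]; norm_num
    · have hn : 1 ≤ n := by omega
      have IH := ih hn
      have hrec := Nat.succ_mul_centralBinom_succ n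
      -- (n+1) * C' = 2*(2n+1)*C
      have key : (n+1) * (16 ^ (n+1)) ≤ (n+1) * (4 * (n+1) * (Nat.centralBinom (n+1))^2) := by
        have e : (n+1) * (4 * (n+1) * (Nat.centralBinom (n+1))^2)
            = 4 * ((n+1) * Nat.centralBinom (n+1))^2 := by ring
        rw [e, hrec]
        calc (n+1) * 16 ^ (n+1) = 16 * ((n + 1) * 16 ^ n) := by ring
        _ ≤ 16 * ((n+1) * (4 * n * (Nat.centralBinom n)^2)) := by
              exact Nat.mul_le_mul_left _ (Nat.mul_le_mul_left _ IH)
        _ ≤ 4 * (2 * (2*n+1) * Nat.centralBinom n)^2 := by nlinarith [sq_nonneg (Nat.centralBinom n)]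
      exact Nat.le_of_mul_le_mul_left key (by omega)
lemma bI_rec (N : ℕ) : bI (N + 1) = 2 * bI N + 2 * cI N := by
  have h := Fintype.sum_equiv (Fin.consEquiv (fun _ : Fin (N+1) => Bool))
      (fun p : Bool × (Fin N → Bool) => |Ssum (N + 1) (Fin.cons p.1 p.2)|)
      (fun η : Fin (N+1) → Bool => |Ssum (N + 1) η|) (fun p => rfl)
  rw [bI, ← h, Fintype.sum_prod_type_right]
  have key : ∀ η : Fin N → Bool,
      (∑ x : Bool, |Ssum (N+1) (Fin.cons x η)|)
        = 2 * |Ssum N η| + 2 * (if Ssum N η = 0 then (1:ℤ) else 0) := by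
    intro η
    rw [Fintype.sum_bool, Ssum_cons, Ssum_cons]
    have hsgt : sg true = 1 := rfl
    have hsgf : sg false = -1 := rfl
    rw [hsgt, hsgf]
    rcases eq_or_ne (Ssum N η) 0 with h0 | h0
    · simp [h0]
    · rw [if_neg h0]
      rcases h0.lt_or_gt with h | h
      · rw [abs_of_nonpos (by omega), abs_of_neg (by omega), abs_of_neg h]; ring
      · rw [abs_of_nonneg (by omega), abs_of_nonneg (by omega), abs_of_pos h]; ring
  rw [Finset.sum_congr rfl (fun η _ => key η), Finset.sum_add_distrib,
    ← Finset.mul_sum, ← Finset.mul_sum, Finset.sum_boole]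
  rfl

lemma bI_sq : ∀ N : ℕ, 1 ≤ N → (4:ℤ)^N * ((N:ℤ) + (N % 2 : ℕ)) ≤ 2 * (bI N)^2 := by
  intro N
  induction N with
  | zero => omega
  | succ n ih =>
    intro _
    rcases Nat.lt_or_ge n 1 with h1 | hn
    · have : n = 0 := by omega
      subst this
      rw [show bI 1 = 2 from bI_one]; norm_num
    · have IH := ih hn
      have hb0 := bI_nonneg n
      have hc0 := cI_nonneg n
      rw [bI_rec]
      rcases Nat.even_or_odd n with he | ho
      · -- n even, n = 2k with k ≥ 1
        obtain ⟨k, hk⟩ := he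
        have hk' : n = 2 * k := by omega
        have hkk : 1 ≤ k := by omega
        have hc : (Nat.centralBinom k : ℤ) ≤ cI n := by rw [hk']; exact cI_ge k
        have hcb : (16:ℤ) ^ k ≤ 4 * k * (Nat.centralBinom k : ℤ) ^ 2 := by
          exact_mod_cast centralBinom_sq k hkk
        have h4 : (4:ℤ)^n = 16^k := by
          rw [hk', pow_mul]; norm_num
        have hkn : (n:ℤ) = 2*(k:ℤ) := by exact_mod_cast hk'
        have hcI : (4:ℤ)^n ≤ 2 * n * (cI n)^2 := by
          have h2 : (Nat.centralBinom k:ℤ)^2 ≤ (cI n)^2 :=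
            pow_le_pow_left₀ (Int.natCast_nonneg _) hc 2
          have hknn : (0:ℤ) ≤ (k:ℤ) := Int.natCast_nonneg _
          calc (4:ℤ)^n = 16^k := h4
          _ ≤ 4 * k * (Nat.centralBinom k:ℤ)^2 := hcb
          _ ≤ 4 * k * (cI n)^2 := by nlinarith
          _ = 2 * n * (cI n)^2 := by rw [hkn]; ring
        have hbn : (4:ℤ)^n * n ≤ 2 * (bI n)^2 := by
          have hmod : ((n % 2 : ℕ) : ℤ) = 0 := by omega
          rw [hmod, add_zero] at IH; exact IH
        have hbc : (4:ℤ)^n ≤ 2 * bI n * cI n := by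
          have hsq : ((4:ℤ)^n)^2 ≤ (2 * bI n * cI n)^2 := by
            have h1 : (4:ℤ)^n * ((4:ℤ)^n * n) ≤ (2 * n * (cI n)^2) * (2 * (bI n)^2) := by
              apply mul_le_mul hcI hbn (by positivity) (by positivity)
            have hnn : (0:ℤ) < n := by exact_mod_cast hn
            nlinarith [sq_nonneg (bI n * cI n)]
          exact le_of_pow_le_pow_left₀ two_ne_zero (by positivity) hsq
        have hmod2 : (((n+1) % 2 : ℕ) : ℤ) = 1 := by omega
        rw [hmod2]
        push_cast
        have hps : (4:ℤ)^(n+1) = 4 * 4^n := by ring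
        rw [hps]
        nlinarith [sq_nonneg (cI n), hbn, hbc]
      · -- n odd
        have hmod : ((n % 2 : ℕ) : ℤ) = 1 := by
          obtain ⟨j, hj⟩ := ho; omega
        have hmod2 : (((n+1) % 2 : ℕ) : ℤ) = 0 := by
          obtain ⟨j, hj⟩ := ho; omega
        rw [hmod] at IH
        rw [hmod2]
        push_cast
        have hps : (4:ℤ)^(n+1) = 4 * 4^n := by ring
        rw [hps]
        nlinarith [sq_nonneg (cI n), mul_nonneg hb0 hc0]

/-- Real sign coefficient of a Boolean. -/
def sgR (b : Bool) : ℝ := if b then 1 else -1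

lemma sgR_eq (b : Bool) : sgR b = ((sg b : ℤ) : ℝ) := by cases b <;> simp [sgR, sg]

/-- The column sums `K_i` are independent of `i`. -/
lemma col_const (N : ℕ) (i i' : Fin N) :
    (∑ η : Fin N → Bool, sgR (η i) * ((Ssum N η).sign : ℝ))
      = ∑ η : Fin N → Bool, sgR (η i') * ((Ssum N η).sign : ℝ) := by
  refine Fintype.sum_equiv (Equiv.arrowCongr (Equiv.swap i i') (Equiv.refl Bool))
    _ _ (fun η => ?_)
  have h1 : (Equiv.arrowCongr (Equiv.swap i i') (Equiv.refl Bool)) η = η ∘ (Equiv.swap i i') := by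
    ext j; simp [Equiv.arrowCongr, Equiv.swap_apply_self]
  rw [h1]
  have h2 : Ssum N (η ∘ (Equiv.swap i i')) = Ssum N η := by
    unfold Ssum
    exact Equiv.sum_comp (Equiv.swap i i') (fun j => sg (η j))
  rw [h2]
  congr 2
  simp [Equiv.swap_apply_left]

lemma sum_col (N : ℕ) (i : Fin N) (hN : 1 ≤ N) :
    (N : ℝ) * (∑ η : Fin N → Bool, sgR (η i) * ((Ssum N η).sign : ℝ)) = (bI N : ℝ) := by
  have h : ∀ i' : Fin N, (∑ η : Fin N → Bool, sgR (η i') * ((Ssum N η).sign : ℝ))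
      = ∑ η : Fin N → Bool, sgR (η i) * ((Ssum N η).sign : ℝ) := fun i' => col_const N i' i
  calc (N : ℝ) * (∑ η : Fin N → Bool, sgR (η i) * ((Ssum N η).sign : ℝ))
      = ∑ i' : Fin N, ∑ η : Fin N → Bool, sgR (η i') * ((Ssum N η).sign : ℝ) := by
        rw [Finset.sum_congr rfl (fun i' _ => h i'), Finset.sum_const]
        simp [mul_comm]
    _ = ∑ η : Fin N → Bool, (∑ i' : Fin N, sgR (η i')) * ((Ssum N η).sign : ℝ) := by
        rw [Finset.sum_comm]
        exact Finset.sum_congr rfl fun η _ => (Finset.sum_mul _ _ _).symm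
    _ = ∑ η : Fin N → Bool, (|Ssum N η| : ℝ) := by
        refine Finset.sum_congr rfl fun η _ => ?_
        have : (∑ i' : Fin N, sgR (η i')) = ((Ssum N η : ℤ) : ℝ) := by
          rw [Ssum]; push_cast [sgR_eq]; rfl
        rw [this]
        rw [show ((Ssum N η : ℤ) : ℝ) * ((Ssum N η).sign : ℝ) = (((Ssum N η * (Ssum N η).sign : ℤ) : ℝ)) by push_cast; ring]
        rw [Int.mul_sign_self]
        norm_cast
    _ = (bI N : ℝ) := by rw [bI]; push_cast; rfl

lemma bI_lb (N : ℕ) (hN : 1 ≤ N) : (2:ℝ)^N * N / Real.sqrt (2 * N) ≤ (bI N : ℝ) := by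
  have hNpos : (0:ℝ) < N := by exact_mod_cast hN
  have hs : (0:ℝ) < Real.sqrt (2 * N) := Real.sqrt_pos.mpr (by positivity)
  rw [div_le_iff₀ hs]
  have hb : (0:ℝ) ≤ (bI N : ℝ) := by exact_mod_cast bI_nonneg N
  have hsq : ((2:ℝ)^N * N)^2 ≤ ((bI N : ℝ) * Real.sqrt (2*N))^2 := by
    have h1 : ((bI N : ℝ) * Real.sqrt (2*N))^2 = (bI N : ℝ)^2 * (2*N) := by
      rw [mul_pow, Real.sq_sqrt (by positivity)]
    rw [h1]
    have h2 : (4:ℝ)^N * N ≤ 2 * (bI N : ℝ)^2 := by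
      have := bI_sq N hN
      have h3 : ((4^N * ((N:ℤ) + (N % 2 : ℕ)) : ℤ) : ℝ) ≤ ((2 * (bI N)^2 : ℤ) : ℝ) :=
        Int.cast_le.mpr this
      push_cast at h3
      have hm : (0:ℝ) ≤ (((N:ℤ) % 2 : ℤ) : ℝ) := by
        have : (0:ℤ) ≤ (N:ℤ) % 2 := Int.emod_nonneg _ two_ne_zero
        exact_mod_cast this
      nlinarith [hm, pow_pos (show (0:ℝ) < 4 by norm_num) N]
    calc ((2:ℝ)^N * N)^2 = ((4:ℝ)^N * N) * N := by
          rw [show (4:ℝ) = 2^2 by norm_num, ← pow_mul, mul_comm 2 N, pow_mul]; ring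
    _ ≤ (2 * (bI N:ℝ)^2) * N := by nlinarith
    _ = (bI N : ℝ)^2 * (2*N) := by ring
  exact le_of_pow_le_pow_left₀ two_ne_zero (by positivity) hsq

/-- Khintchine-type lower bound. -/
lemma khint (N : ℕ) (hN : 1 ≤ N) (a : Fin N → ℝ) (ha : ∀ i, 0 ≤ a i) :
    (∑ i, a i) * 2^N / Real.sqrt (2 * N) ≤
      ∑ η : Fin N → Bool, |∑ i, a i * sgR (η i)| := by
  have i0 : Fin N := ⟨0, hN⟩
  have step1 : (∑ η : Fin N → Bool, (∑ i, a i * sgR (η i)) * ((Ssum N η).sign : ℝ))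
      ≤ ∑ η : Fin N → Bool, |∑ i, a i * sgR (η i)| := by
    refine Finset.sum_le_sum fun η _ => ?_
    have h1 : |((Ssum N η).sign : ℝ)| ≤ 1 := by
      rcases Ssum N η with (_|n)|n <;> simp [Int.sign] <;> norm_num
    calc (∑ i, a i * sgR (η i)) * ((Ssum N η).sign : ℝ)
        ≤ |(∑ i, a i * sgR (η i)) * ((Ssum N η).sign : ℝ)| := le_abs_self _
      _ = |∑ i, a i * sgR (η i)| * |((Ssum N η).sign : ℝ)| := abs_mul _ _
      _ ≤ |∑ i, a i * sgR (η i)| := by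
          nlinarith [abs_nonneg (∑ i, a i * sgR (η i))]
  have step2 : (∑ η : Fin N → Bool, (∑ i, a i * sgR (η i)) * ((Ssum N η).sign : ℝ))
      = (∑ i, a i) * ((bI N : ℝ) / N) := by
    have hNpos : (0:ℝ) < N := by exact_mod_cast hN
    have swap : (∑ η : Fin N → Bool, (∑ i, a i * sgR (η i)) * ((Ssum N η).sign : ℝ))
        = ∑ i, a i * (∑ η : Fin N → Bool, sgR (η i) * ((Ssum N η).sign : ℝ)) := by
      calc (∑ η : Fin N → Bool, (∑ i, a i * sgR (η i)) * ((Ssum N η).sign : ℝ))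
          = ∑ η : Fin N → Bool, ∑ i, a i * (sgR (η i) * ((Ssum N η).sign : ℝ)) := by
            refine Finset.sum_congr rfl fun η _ => ?_
            rw [Finset.sum_mul]
            exact Finset.sum_congr rfl fun i _ => by ring
        _ = ∑ i, ∑ η : Fin N → Bool, a i * (sgR (η i) * ((Ssum N η).sign : ℝ)) :=
            Finset.sum_comm
        _ = ∑ i, a i * (∑ η : Fin N → Bool, sgR (η i) * ((Ssum N η).sign : ℝ)) := by
            exact Finset.sum_congr rfl fun i _ => (Finset.mul_sum _ _ _).symm
    rw [swap]
    have : ∀ i : Fin N, (∑ η : Fin N → Bool, sgR (η i) * ((Ssum N η).sign : ℝ)) = (bI N : ℝ) / N := by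
      intro i
      field_simp
      rw [mul_comm]
      exact sum_col N i hN
    rw [Finset.sum_congr rfl fun i _ => by rw [this i]]
    rw [← Finset.sum_mul]
  have step3 : (∑ i, a i) * 2^N / Real.sqrt (2*N) ≤ (∑ i, a i) * ((bI N : ℝ) / N) := by
    have hA : 0 ≤ ∑ i, a i := Finset.sum_nonneg fun i _ => ha i
    have hNpos : (0:ℝ) < N := by exact_mod_cast hN
    have := bI_lb N hN
    have h2 : (2:ℝ)^N / Real.sqrt (2*N) ≤ (bI N : ℝ) / N := by
      rw [div_le_div_iff₀ (Real.sqrt_pos.mpr (by positivity)) hNpos]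
      calc (2:ℝ)^N * N = (2:ℝ)^N * N / Real.sqrt (2*N) * Real.sqrt (2*N) := by
            field_simp
      _ ≤ (bI N : ℝ) * Real.sqrt (2*N) := by
            apply mul_le_mul_of_nonneg_right this (Real.sqrt_nonneg _)
    calc (∑ i, a i) * 2^N / Real.sqrt (2*N) = (∑ i, a i) * ((2:ℝ)^N / Real.sqrt (2*N)) := by ring
    _ ≤ (∑ i, a i) * ((bI N : ℝ) / N) := mul_le_mul_of_nonneg_left h2 hA
  linarith [step1, step2 ▸ step3]

/-- Summing a function of one column over all sign matrices. -/
lemma colsum (N d : ℕ) (F : (Fin N → Bool) → ℝ) (j : Fin d) :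
    ∑ ε : Fin N → Fin d → Bool, F (fun i => ε i j)
      = (2:ℝ)^((d-1)*N) * ∑ η : Fin N → Bool, F η := by
  classical
  let e := (Equiv.arrowCongr (Equiv.refl (Fin N)) (Equiv.piSplitAt j (fun _ : Fin d => Bool))).trans
    (Equiv.arrowProdEquivProdArrow _ _ _)
  have h := Fintype.sum_equiv e (fun ε : Fin N → Fin d → Bool => F (fun i => ε i j))
    (fun p : (Fin N → Bool) × (Fin N → {j' : Fin d // j' ≠ j} → Bool) => F p.1)
    (fun ε => rfl)
  rw [h, Fintype.sum_prod_type]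
  have hcard : (Fintype.card (Fin N → {j' : Fin d // j' ≠ j} → Bool)) = 2^((d-1)*N) := by
    rw [Fintype.card_fun, Fintype.card_fun]
    have : Fintype.card {j' : Fin d // j' ≠ j} = d - 1 := by
      simp [Fintype.card_subtype_compl]
    rw [this, Fintype.card_bool, ← pow_mul, Fintype.card_fin]
  calc (∑ η : Fin N → Bool, ∑ _r : Fin N → {j' : Fin d // j' ≠ j} → Bool, F η)
      = ∑ η : Fin N → Bool, (2:ℝ)^((d-1)*N) * F η := by
        refine Finset.sum_congr rfl fun η _ => ?_
        rw [Finset.sum_const, Finset.card_univ, hcard, nsmul_eq_mul]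
        push_cast
        ring
    _ = (2:ℝ)^((d-1)*N) * ∑ η : Fin N → Bool, F η := by rw [← Finset.mul_sum]

/-- Flipping row `i` of a sign matrix is an involution. -/
lemma flip_invol (N d : ℕ) (i : Fin N) :
    Function.Involutive (fun ε : Fin N → Fin d → Bool =>
      Function.update ε i (fun j => !(ε i j))) := by
  intro ε
  funext k
  rcases eq_or_ne k i with rfl | hk
  · simp [Function.update_self]
  · simp [Function.update_of_ne hk]


open scoped RealInnerProductSpace

open scoped RealInnerProductSpace
open Finset
noncomputable section

lemma inner_ev (d : ℕ) (v x : EV d) : ⟪v, x⟫ = ∑ j, v j * x j := by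
  simp [PiLp.inner_apply, RCLike.inner_apply]
  exact Finset.sum_congr rfl fun _ _ => mul_comm _ _

lemma cornerVec_apply (d N : ℕ) (G : ℝ) (ε : Fin N → Fin d → Bool) (i : Fin N) (j : Fin d) :
    cornerVec d N G ε i j = sgR (ε i j) * (G / Real.sqrt d) := by simp [cornerVec, sgR]

lemma cornerVec_update_self (d N : ℕ) (G : ℝ) (ε : Fin N → Fin d → Bool) (i : Fin N) :
    cornerVec d N G (Function.update ε i (fun j => !(ε i j))) i = -(cornerVec d N G ε i) := by
  ext j
  show (if Function.update ε i (fun j => !(ε i j)) i j then (1:ℝ) else -1) * (G / Real.sqrt d)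
      = -((if ε i j then (1:ℝ) else -1) * (G / Real.sqrt d))
  rw [Function.update_self]
  cases h : ε i j <;> simp [h]

lemma cornerVec_update_other (d N : ℕ) (G : ℝ) (ε : Fin N → Fin d → Bool) (f : Fin d → Bool)
    (i k : Fin N) (h : k ≠ i) :
    cornerVec d N G (Function.update ε i f) k = cornerVec d N G ε k := by
  ext j
  show (if Function.update ε i f k j then (1:ℝ) else -1) * _ = _
  rw [Function.update_of_ne h]
  rfl

theorem statement_5 (m d C T n K' Z : ℕ)
    (hm : 1 ≤ m) (hd : 1 ≤ d) (hC : 1 ≤ C) (hT : 1 ≤ T)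
    (hn : n = 2 * (m + 1)) (hK' : K' = (m + 1) / 2) (hZ : Z = C / K')
    (R G : ℝ) (hR : 0 < R) (hG : 0 < G)
    (c : ℕ → ℕ) (hc0 : c 0 = 0) (hcmono : ∀ j, j < C → c j < c (j + 1)) (hcT : c C < T)
    (cc : ℕ → ℕ) (hccle : ∀ i, i ≤ Z → cc i = c (i * K')) (hccZ : cc (Z + 1) = T)
    (Kset : Set (EV d))
    (hKset : Kset = {x : EV d | ∀ j, |x j| ≤ R / Real.sqrt d})
    -- delayed decision rule: in interval i, the decision depends only on w_0,…,w_{i−1}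
    (X : ℕ → (Fin (Z + 1) → EV d) → EV d)
    (hXmem : ∀ t w, X t w ∈ Kset)
    (hXdelay : ∀ i : Fin (Z + 1), ∀ t, cc i < t → t ≤ cc ((i : ℕ) + 1) →
        ∀ w w' : Fin (Z + 1) → EV d,
          (∀ j : Fin (Z + 1), (j : ℕ) < (i : ℕ) → w j = w' j) → X t w = X t w') :
    -- expected regret lower bound
    ((n : ℝ) - 2 * K' + 1) * R * G * T / Real.sqrt (2 * (Z + 1)) ≤
      (∑ ε : Fin (Z + 1) → Fin d → Bool,
          ((∑ i : Fin (Z + 1), ∑ t ∈ Finset.Ioc (cc i) (cc ((i : ℕ) + 1)),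
              ((n : ℝ) - 2 * K' + 1) * ⟪cornerVec d (Z + 1) G ε i, X t (cornerVec d (Z + 1) G ε)⟫)
            - sInf ((fun x : EV d => ∑ i : Fin (Z + 1),
                ((cc ((i : ℕ) + 1) : ℝ) - (cc i : ℝ)) *
                  (((n : ℝ) - 2 * K' + 1) * ⟪cornerVec d (Z + 1) G ε i, x⟫)) '' Kset)))
        / 2 ^ ((Z + 1) * d) := by
  classical
  set L : Fin (Z + 1) → ℝ := fun i => ((cc ((i : ℕ) + 1) : ℝ) - (cc i : ℝ)) with hL
  -- basic positivity facts
  have hsd : (0:ℝ) < Real.sqrt d := Real.sqrt_pos.mpr (by exact_mod_cast hd)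
  have hApos : (0:ℝ) < ((n : ℝ) - 2 * (K':ℝ) + 1) := by
    have h2K : 2 * K' ≤ m + 1 := by
      rw [hK', mul_comm]; exact Nat.div_mul_le_self (m+1) 2
    have : (2 * K' : ℝ) ≤ (m:ℝ) + 1 := by exact_mod_cast h2K
    rw [hn]; push_cast; linarith
  have hK'1 : 1 ≤ K' := by rw [hK']; omega
  -- monotonicity of c
  have cmono : ∀ b, b ≤ C → ∀ a, a < b → c a < c b := by
    intro b
    induction b with
    | zero => omega
    | succ k ih =>
      intro hbC a ha
      rcases Nat.lt_or_ge a k with h | h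
      · exact lt_trans (ih (by omega) a h) (hcmono k (by omega))
      · have : a = k := by omega
        subst this; exact hcmono a (by omega)
  have cmono' : ∀ a b, a ≤ b → b ≤ C → c a ≤ c b := by
    intro a b hab hbC
    rcases Nat.eq_or_lt_of_le hab with rfl | h
    · exact le_refl _
    · exact le_of_lt (cmono b hbC a h)
  have hZK : Z * K' ≤ C := by rw [hZ]; exact Nat.div_mul_le_self C K'
  have hccinc : ∀ i : ℕ, i ≤ Z → cc i < cc (i + 1) := by
    intro i hi
    rcases Nat.eq_or_lt_of_le hi with rfl | hlt
    · rw [hccle i le_rfl, hccZ]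
      calc c (i * K') ≤ c C := cmono' _ _ (le_trans le_rfl hZK) le_rfl
        _ < T := hcT
    · rw [hccle i hi, hccle (i+1) (by omega)]
      apply cmono ((i+1) * K') (le_trans (Nat.mul_le_mul_right _ (by omega)) hZK)
      exact (Nat.mul_lt_mul_right (by omega)).mpr (by omega)
  have hLpos : ∀ i : Fin (Z + 1), 0 < L i := by
    intro i
    have := hccinc i (Fin.is_le i)
    rw [hL]; simp only; push_cast
    have : (cc i : ℝ) < cc ((i:ℕ)+1) := by exact_mod_cast this
    linarith
  have hLnonneg : ∀ i : Fin (Z + 1), 0 ≤ L i := fun i => le_of_lt (hLpos i)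
  have hcc0 : cc 0 = 0 := by rw [hccle 0 (Nat.zero_le _), Nat.zero_mul, hc0]
  have hLT : ∑ i : Fin (Z + 1), L i = (T:ℝ) := by
    rw [hL]
    calc ∑ i : Fin (Z + 1), (((cc ((i:ℕ) + 1) : ℕ) : ℝ) - ((cc (i:ℕ) : ℕ) : ℝ))
        = ∑ i ∈ Finset.range (Z + 1), (((cc (i + 1) : ℕ) : ℝ) - ((cc i : ℕ) : ℝ)) :=
          Fin.sum_univ_eq_sum_range (fun i => ((cc (i + 1) : ℕ) : ℝ) - ((cc i : ℕ) : ℝ)) (Z + 1)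
      _ = ((cc (Z + 1) : ℕ) : ℝ) - ((cc 0 : ℕ) : ℝ) := Finset.sum_range_sub (fun i => ((cc i : ℕ) : ℝ)) (Z + 1)
      _ = (T:ℝ) := by rw [hccZ, hcc0]; simp
    -- abbreviations for the three pieces
  set P : (Fin (Z + 1) → Fin d → Bool) → ℝ := fun ε =>
    ∑ i : Fin (Z + 1), ∑ t ∈ Finset.Ioc (cc i) (cc ((i : ℕ) + 1)),
      ((n : ℝ) - 2 * (K':ℝ) + 1) * ⟪cornerVec d (Z + 1) G ε i, X t (cornerVec d (Z + 1) G ε)⟫ with hP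
  set gg : (Fin (Z + 1) → Fin d → Bool) → EV d → ℝ := fun ε x =>
    ∑ i : Fin (Z + 1), L i * (((n : ℝ) - 2 * (K':ℝ) + 1) * ⟪cornerVec d (Z + 1) G ε i, x⟫) with hgg
  set II : (Fin (Z + 1) → Fin d → Bool) → ℝ := fun ε => sInf (gg ε '' Kset) with hII
  -- Part ((n : ℝ) - 2 * (K':ℝ) + 1) : the play term has zero expectation
  have partA : ∑ ε : Fin (Z + 1) → Fin d → Bool, P ε = 0 := by
    have hzero : ∀ i : Fin (Z + 1), ∀ t, cc i < t → t ≤ cc ((i : ℕ) + 1) →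
        ∑ ε : Fin (Z + 1) → Fin d → Bool, ((n : ℝ) - 2 * (K':ℝ) + 1) * ⟪cornerVec d (Z + 1) G ε i, X t (cornerVec d (Z + 1) G ε)⟫ = 0 := by
      intro i t ht1 ht2
      set φ : Equiv.Perm (Fin (Z + 1) → Fin d → Bool) := (flip_invol (Z + 1) d i).toPerm with hφ
      have hφap : ∀ ε, φ ε = Function.update ε i (fun j => !(ε i j)) := fun _ => rfl
      set f : (Fin (Z + 1) → Fin d → Bool) → ℝ := fun ε =>
        ((n : ℝ) - 2 * (K':ℝ) + 1) * ⟪cornerVec d (Z + 1) G ε i, X t (cornerVec d (Z + 1) G ε)⟫ with hf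
      have h1 : ∑ ε : Fin (Z + 1) → Fin d → Bool, f (φ ε) = ∑ ε : Fin (Z + 1) → Fin d → Bool, f ε :=
        Equiv.sum_comp φ f
      have h2 : ∀ ε, f (φ ε) = -(f ε) := by
        intro ε
        have hX : X t (cornerVec d (Z + 1) G (φ ε)) = X t (cornerVec d (Z + 1) G ε) := by
          refine hXdelay i t ht1 ht2 _ _ (fun k hk => ?_)
          rw [hφap]
          exact cornerVec_update_other d (Z + 1) G ε _ i k (by
            intro hki; rw [hki] at hk; exact lt_irrefl _ hk)
        rw [hf]
        simp only
        rw [hX, hφap, cornerVec_update_self, inner_neg_left]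
        ring
      have h3 : ∑ ε : Fin (Z + 1) → Fin d → Bool, f (φ ε) = -∑ ε : Fin (Z + 1) → Fin d → Bool, f ε := by
        rw [Finset.sum_congr rfl fun ε _ => h2 ε, Finset.sum_neg_distrib]
      have := h1.symm.trans h3
      linarith [this]
    rw [hP]
    simp only
    rw [Finset.sum_comm]
    refine Finset.sum_eq_zero fun i _ => ?_
    rw [Finset.sum_comm]
    refine Finset.sum_eq_zero fun t ht => ?_
    rw [Finset.mem_Ioc] at ht
    exact hzero i t ht.1 ht.2
  -- Part B : lower bound for minus the infimum
  have partB : ∀ ε : Fin (Z + 1) → Fin d → Bool, II ε ≤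
      -((((n : ℝ) - 2 * (K':ℝ) + 1) * G / Real.sqrt d) * (R / Real.sqrt d) *
        ∑ j : Fin d, |∑ i : Fin (Z + 1), L i * sgR (ε i j)|) := by
    intro ε
    set s : Fin d → ℝ := fun j => (((n : ℝ) - 2 * (K':ℝ) + 1) * G / Real.sqrt d) * (∑ i : Fin (Z + 1), L i * sgR (ε i j)) with hs
    have hglin : ∀ x : EV d, gg ε x = ∑ j : Fin d, s j * x j := by
      intro x
      rw [hgg]
      simp only
      calc ∑ i : Fin (Z + 1), L i * (((n : ℝ) - 2 * (K':ℝ) + 1) * ⟪cornerVec d (Z + 1) G ε i, x⟫)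
          = ∑ i : Fin (Z + 1), ∑ j : Fin d, L i * (((n : ℝ) - 2 * (K':ℝ) + 1) * ((sgR (ε i j) * (G / Real.sqrt d)) * x j)) := by
            refine Finset.sum_congr rfl fun i _ => ?_
            rw [inner_ev, Finset.mul_sum, Finset.mul_sum]
            refine Finset.sum_congr rfl fun j _ => ?_
            rw [cornerVec_apply]
        _ = ∑ j : Fin d, ∑ i : Fin (Z + 1), L i * (((n : ℝ) - 2 * (K':ℝ) + 1) * ((sgR (ε i j) * (G / Real.sqrt d)) * x j)) :=
            Finset.sum_comm
        _ = ∑ j : Fin d, s j * x j := by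
            refine Finset.sum_congr rfl fun j _ => ?_
            rw [hs]
            simp only
            rw [Finset.mul_sum, Finset.sum_mul]
            refine Finset.sum_congr rfl fun i _ => ?_
            ring
    have hRd : (0:ℝ) ≤ R / Real.sqrt d := by positivity
    set xstar : EV d := WithLp.toLp 2 (fun j => if 0 ≤ s j then -(R / Real.sqrt d) else (R / Real.sqrt d)) with hxs
    have hxmem : xstar ∈ Kset := by
      rw [hKset]
      intro j
      by_cases h : 0 ≤ s j <;> simp [hxs, h, abs_of_nonneg hRd, abs_neg]
    have hterm : ∀ j : Fin d, s j * xstar j = -(|s j| * (R / Real.sqrt d)) := by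
      intro j
      by_cases h : 0 ≤ s j
      · rw [hxs]; simp only [WithLp.ofLp_toLp, if_pos h, abs_of_nonneg h]; ring
      · push_neg at h
        rw [hxs]; simp only [WithLp.ofLp_toLp, if_neg (not_le.mpr h), abs_of_neg h]; ring
    have hval : gg ε xstar = -(∑ j : Fin d, |s j| * (R / Real.sqrt d)) := by
      rw [hglin, Finset.sum_congr rfl fun j _ => hterm j, Finset.sum_neg_distrib]
    have hlb : ∀ y ∈ gg ε '' Kset, -(∑ j : Fin d, |s j| * (R / Real.sqrt d)) ≤ y := by
      rintro y ⟨x, hx, rfl⟩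
      rw [hglin, ← Finset.sum_neg_distrib]
      refine Finset.sum_le_sum fun j _ => ?_
      have hxj : |x j| ≤ R / Real.sqrt d := by rw [hKset] at hx; exact hx j
      calc -(|s j| * (R / Real.sqrt d)) ≤ -(|s j| * |x j|) := by
            nlinarith [abs_nonneg (s j), abs_nonneg (x j)]
        _ = -|s j * x j| := by rw [abs_mul (s j) (x j)]
        _ ≤ s j * x j := neg_abs_le _
    have hinf : II ε ≤ gg ε xstar := by
      rw [hII]
      exact csInf_le ⟨_, hlb⟩ ⟨xstar, hxmem, rfl⟩
    have habs : ∀ j : Fin d, |s j| = (((n : ℝ) - 2 * (K':ℝ) + 1) * G / Real.sqrt d) * |∑ i : Fin (Z + 1), L i * sgR (ε i j)| := by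
      intro j
      rw [hs]
      simp only
      rw [abs_mul, abs_of_pos (show (0:ℝ) < ((n : ℝ) - 2 * (K':ℝ) + 1) * G / Real.sqrt d by positivity)]
    calc II ε ≤ gg ε xstar := hinf
      _ = -(∑ j : Fin d, |s j| * (R / Real.sqrt d)) := hval
      _ = -((((n : ℝ) - 2 * (K':ℝ) + 1) * G / Real.sqrt d) * (R / Real.sqrt d) *
            ∑ j : Fin d, |∑ i : Fin (Z + 1), L i * sgR (ε i j)|) := by
          rw [Finset.sum_congr rfl fun j _ => by rw [habs j]]
          rw [Finset.mul_sum, ← Finset.sum_mul]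
          congr 1
          rw [Finset.sum_mul]
          refine Finset.sum_congr rfl fun j _ => ?_
          ring
  -- Part C : Khintchine bound for each column
  have hNge : 1 ≤ (Z + 1) := by omega
  have hT2 : (T:ℝ) * 2^(Z + 1) / Real.sqrt (2 * (((Z + 1):ℕ):ℝ)) ≤
      ∑ η : Fin (Z + 1) → Bool, |∑ i : Fin (Z + 1), L i * sgR (η i)| := by
    have h := khint (Z + 1) hNge L hLnonneg
    rwa [hLT] at h
  have partC : ∀ j : Fin d,
      (2:ℝ)^((d-1)*(Z + 1)) * ((T:ℝ) * 2^(Z + 1) / Real.sqrt (2 * (((Z + 1):ℕ):ℝ)))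
        ≤ ∑ ε : Fin (Z + 1) → Fin d → Bool, |∑ i : Fin (Z + 1), L i * sgR (ε i j)| := by
    intro j
    rw [colsum (Z + 1) d (fun η => |∑ i : Fin (Z + 1), L i * sgR (η i)|) j]
    exact mul_le_mul_of_nonneg_left hT2 (by positivity)
  -- Glue
  have hsum : ∑ ε : Fin (Z + 1) → Fin d → Bool, (P ε - II ε) = - ∑ ε : Fin (Z + 1) → Fin d → Bool, II ε := by
    rw [Finset.sum_sub_distrib, partA, zero_sub]
  have hIIb : ∑ ε : Fin (Z + 1) → Fin d → Bool, II ε ≤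
      -((((n : ℝ) - 2 * (K':ℝ) + 1) * G / Real.sqrt d) * (R / Real.sqrt d) *
        ∑ ε : Fin (Z + 1) → Fin d → Bool, ∑ j : Fin d, |∑ i : Fin (Z + 1), L i * sgR (ε i j)|) := by
    calc ∑ ε : Fin (Z + 1) → Fin d → Bool, II ε
        ≤ ∑ ε : Fin (Z + 1) → Fin d → Bool, -((((n : ℝ) - 2 * (K':ℝ) + 1) * G / Real.sqrt d) * (R / Real.sqrt d) *
            ∑ j : Fin d, |∑ i : Fin (Z + 1), L i * sgR (ε i j)|) :=
          Finset.sum_le_sum fun ε _ => partB ε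
      _ = -((((n : ℝ) - 2 * (K':ℝ) + 1) * G / Real.sqrt d) * (R / Real.sqrt d) *
            ∑ ε : Fin (Z + 1) → Fin d → Bool, ∑ j : Fin d, |∑ i : Fin (Z + 1), L i * sgR (ε i j)|) := by
          rw [Finset.sum_neg_distrib, ← Finset.mul_sum]
  have hcolsumall : (d:ℝ) * ((2:ℝ)^((d-1)*(Z + 1)) * ((T:ℝ) * 2^(Z + 1) / Real.sqrt (2 * (((Z + 1):ℕ):ℝ))))
      ≤ ∑ ε : Fin (Z + 1) → Fin d → Bool, ∑ j : Fin d, |∑ i : Fin (Z + 1), L i * sgR (ε i j)| := by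
    rw [Finset.sum_comm]
    calc (d:ℝ) * ((2:ℝ)^((d-1)*(Z + 1)) * ((T:ℝ) * 2^(Z + 1) / Real.sqrt (2 * (((Z + 1):ℕ):ℝ))))
        = ∑ _j : Fin d, (2:ℝ)^((d-1)*(Z + 1)) * ((T:ℝ) * 2^(Z + 1) / Real.sqrt (2 * (((Z + 1):ℕ):ℝ))) := by
          rw [Finset.sum_const, Finset.card_univ, Fintype.card_fin, nsmul_eq_mul]
      _ ≤ ∑ j : Fin d, ∑ ε : Fin (Z + 1) → Fin d → Bool, |∑ i : Fin (Z + 1), L i * sgR (ε i j)| :=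
          Finset.sum_le_sum fun j _ => partC j
  have hdpos : (0:ℝ) < d := by exact_mod_cast hd
  have hconst : (((n : ℝ) - 2 * (K':ℝ) + 1) * G / Real.sqrt d) * (R / Real.sqrt d) = ((n : ℝ) - 2 * (K':ℝ) + 1) * G * R / d := by
    rw [div_mul_div_comm, Real.mul_self_sqrt (by positivity)]
  have hexp : (2:ℝ)^((d-1)*(Z + 1)) * 2^(Z + 1) = 2^((Z + 1)*d) := by
    rw [← pow_add]
    congr 1
    have hdd : d - 1 + 1 = d := Nat.succ_pred_eq_of_pos hd
    calc (d-1)*(Z + 1) + (Z + 1) = ((d-1)+1)*(Z + 1) := by ring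
      _ = d * (Z + 1) := by rw [hdd]
      _ = (Z + 1) * d := Nat.mul_comm _ _
  have hKpos : (0:ℝ) < (((n : ℝ) - 2 * (K':ℝ) + 1) * G / Real.sqrt d) * (R / Real.sqrt d) := by positivity
  have key : ((n : ℝ) - 2 * (K':ℝ) + 1) * R * G * T * 2^((Z + 1)*d) / Real.sqrt (2 * (((Z + 1):ℕ):ℝ))
      ≤ ∑ ε : Fin (Z + 1) → Fin d → Bool, (P ε - II ε) := by
    rw [hsum]
    have h1 : (((n : ℝ) - 2 * (K':ℝ) + 1) * G / Real.sqrt d) * (R / Real.sqrt d) *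
        ((d:ℝ) * ((2:ℝ)^((d-1)*(Z + 1)) * ((T:ℝ) * 2^(Z + 1) / Real.sqrt (2 * (((Z + 1):ℕ):ℝ)))))
        ≤ (((n : ℝ) - 2 * (K':ℝ) + 1) * G / Real.sqrt d) * (R / Real.sqrt d) *
          (∑ ε : Fin (Z + 1) → Fin d → Bool, ∑ j : Fin d, |∑ i : Fin (Z + 1), L i * sgR (ε i j)|) :=
      mul_le_mul_of_nonneg_left hcolsumall (le_of_lt hKpos)
    have h2 : (((n : ℝ) - 2 * (K':ℝ) + 1) * G / Real.sqrt d) * (R / Real.sqrt d) *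
        ((d:ℝ) * ((2:ℝ)^((d-1)*(Z + 1)) * ((T:ℝ) * 2^(Z + 1) / Real.sqrt (2 * (((Z + 1):ℕ):ℝ)))))
        = ((n : ℝ) - 2 * (K':ℝ) + 1) * R * G * T * 2^((Z + 1)*d) / Real.sqrt (2 * (((Z + 1):ℕ):ℝ)) := by
      rw [hconst, ← hexp]
      field_simp
    linarith [h1, h2 ▸ h1, hIIb]
  -- final computation
  have hcast : (2:ℝ) * ((Z:ℝ) + 1) = 2 * (((Z + 1):ℕ):ℝ) := by push_cast; ring
  have hgoalsum : (∑ ε : Fin (Z+1) → Fin d → Bool,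
      ((∑ i : Fin (Z + 1), ∑ t ∈ Finset.Ioc (cc i) (cc ((i : ℕ) + 1)),
          ((n : ℝ) - 2 * (K':ℝ) + 1) * ⟪cornerVec d (Z + 1) G ε i, X t (cornerVec d (Z + 1) G ε)⟫)
        - sInf ((fun x : EV d => ∑ i : Fin (Z + 1),
            ((cc ((i : ℕ) + 1) : ℝ) - (cc i : ℝ)) *
              (((n : ℝ) - 2 * (K':ℝ) + 1) * ⟪cornerVec d (Z + 1) G ε i, x⟫)) '' Kset)))
      = ∑ ε : Fin (Z + 1) → Fin d → Bool, (P ε - II ε) := rfl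
  rw [hgoalsum, hcast]
  have h2pow : (0:ℝ) < 2^((Z + 1)*d) := by positivity
  rw [le_div_iff₀ h2pow]
  calc ((n : ℝ) - 2 * (K':ℝ) + 1) * R * G * ↑T / Real.sqrt (2 * (((Z + 1):ℕ):ℝ)) * 2^((Z + 1)*d)
      = ((n : ℝ) - 2 * (K':ℝ) + 1) * R * G * ↑T * 2^((Z + 1)*d) / Real.sqrt (2 * (((Z + 1):ℕ):ℝ)) := by ring
    _ ≤ ∑ ε : Fin (Z + 1) → Fin d → Bool, (P ε - II ε) := key
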